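/- There exist constants C_w > 0 and iota_w > 0 (depending only on lambda, mu and the laws of U_0, V_0, but not on n, a, w, y) such that for every n >= 0 and every a > 0, P(W_n >= a) <= C_w * exp( - iota_w * max(a - w, 0) ). -/

import Mathlib

open MeasureTheory ProbabilityTheory
open scoped ENNReal

lemma exp_le_aux (x : ℝ) (hx : 0 ≤ x) : Real.exp x ≤ 1 + x + x ^ 2 * Real.exp x := by
  have h1 : (-x) + 1 ≤ Real.exp (-x) := Real.add_one_le_exp (-x)
  have h2 : Real.exp (-x) * Real.exp x = 1 := by rw [← Real.exp_add]; simp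
  nlinarith [Real.exp_pos x, Real.exp_pos (-x), mul_nonneg hx hx,
    mul_le_mul_of_nonneg_right h1 (Real.exp_pos x).le]

lemma exp_neg_le_aux (s : ℝ) (hs : 0 ≤ s) : Real.exp (-s) ≤ 1 - s + s ^ 2 := by
  have h1 : s + 1 ≤ Real.exp s := Real.add_one_le_exp s
  have h2 : Real.exp (-s) * Real.exp s = 1 := by rw [← Real.exp_add]; simp
  nlinarith [Real.exp_pos s, Real.exp_pos (-s), mul_nonneg hs hs,
    mul_le_mul_of_nonneg_left h1 (Real.exp_pos (-s)).le, pow_nonneg hs 3,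
    mul_nonneg (mul_nonneg hs hs) hs]

lemma sq_le_exp_aux (c u : ℝ) (hc : 0 < c) (hu : 0 ≤ u) :
    u ^ 2 ≤ 4 / c ^ 2 * Real.exp (c * u) := by
  have hx : 0 ≤ c * u / 2 := div_nonneg (mul_nonneg hc.le hu) (by norm_num)
  have h1 : c * u / 2 ≤ Real.exp (c * u / 2) :=
    (le_add_of_nonneg_right zero_le_one).trans (Real.add_one_le_exp _)
  have h2 : (c * u / 2) ^ 2 ≤ Real.exp (c * u / 2) ^ 2 := pow_le_pow_left₀ hx h1 2
  have h3 : Real.exp (c * u / 2) ^ 2 = Real.exp (c * u) := by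
    rw [← Real.exp_nat_mul]; ring_nf
  rw [h3] at h2
  rw [div_mul_eq_mul_div, le_div_iff₀ (pow_pos hc 2)]
  nlinarith [h2]

set_option maxHeartbeats 1000000 in
/-- uniform sub-exponential tail bound for the GI/GI/1 waiting-time
process `W_n` with fixed parameters `0 < lam < mu`. -/
theorem stmt1
    {Ω : Type*} [MeasureSpace Ω] [IsProbabilityMeasure (ℙ : Measure Ω)]
    (U V : ℕ → Ω → ℝ)
    (hUmeas : ∀ n, Measurable (U n)) (hVmeas : ∀ n, Measurable (V n))
    (hindep : iIndepFun
      (fun i : ℕ ⊕ ℕ => Sum.elim U V i) ℙ)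
    (hUnonneg : ∀ n ω, 0 ≤ U n ω) (hVnonneg : ∀ n ω, 0 ≤ V n ω)
    (hUid : ∀ n, IdentDistrib (U n) (U 0) ℙ ℙ)
    (hVid : ∀ n, IdentDistrib (V n) (V 0) ℙ ℙ)
    (hUmean : ∫ ω, U 0 ω ∂ℙ = 1) (hVmean : ∫ ω, V 0 ω ∂ℙ = 1)
    (η : ℝ) (hη : 0 < η)
    (hUexp : Integrable (fun ω => Real.exp (η * U 0 ω)) ℙ)
    (hVexp : Integrable (fun ω => Real.exp (η * V 0 ω)) ℙ)
    (lam mu : ℝ) (hlam : 0 < lam) (hlammu : lam < mu) :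
    ∃ Cw > (0 : ℝ), ∃ ιw > (0 : ℝ),
      ∀ w y : ℝ, 0 ≤ w → 0 ≤ y →
      ∀ W Y : ℕ → Ω → ℝ,
        (∀ ω, W 0 ω = w) → (∀ ω, Y 0 ω = y) →
        (∀ n ω, W (n + 1) ω = max (W n ω + V n ω / mu - U n ω / lam) 0) →
        (∀ n ω, Y (n + 1) ω =
          if 0 < W (n + 1) ω then Y n ω + U n ω / lam else 0) →
        ∀ (n : ℕ) (a : ℝ), 0 < a →
          (ℙ {ω | a ≤ W n ω}).toReal ≤ Cw * Real.exp (-ιw * max (a - w) 0) := by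
  classical
  have hmu : 0 < mu := hlam.trans hlammu
  set δ : ℝ := 1 / lam - 1 / mu with hδdef
  have hδ : 0 < δ := sub_pos.2 (one_div_lt_one_div_of_lt hlam hlammu)
  -- integrability of basic moments
  have intU : Integrable (U 0) ℙ := by
    refine Integrable.mono' (hUexp.const_mul (1 / η)) (hUmeas 0).aestronglyMeasurable
      (ae_of_all _ fun ω => ?_)
    rw [Real.norm_of_nonneg (hUnonneg 0 ω)]
    rw [div_mul_eq_mul_div, le_div_iff₀ hη, one_mul, mul_comm]
    exact (le_add_of_nonneg_right zero_le_one).trans (Real.add_one_le_exp _)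
  have intV : Integrable (V 0) ℙ := by
    refine Integrable.mono' (hVexp.const_mul (1 / η)) (hVmeas 0).aestronglyMeasurable
      (ae_of_all _ fun ω => ?_)
    rw [Real.norm_of_nonneg (hVnonneg 0 ω)]
    rw [div_mul_eq_mul_div, le_div_iff₀ hη, one_mul, mul_comm]
    exact (le_add_of_nonneg_right zero_le_one).trans (Real.add_one_le_exp _)
  have intU2 : Integrable (fun ω => U 0 ω ^ 2) ℙ := by
    refine Integrable.mono' (hUexp.const_mul (4 / η ^ 2))
      ((hUmeas 0).pow_const 2).aestronglyMeasurable (ae_of_all _ fun ω => ?_)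
    rw [Real.norm_of_nonneg (pow_nonneg (hUnonneg 0 ω) 2)]
    exact sq_le_exp_aux η (U 0 ω) hη (hUnonneg 0 ω)
  have intVe : Integrable (fun ω => V 0 ω ^ 2 * Real.exp (η / 2 * V 0 ω)) ℙ := by
    refine Integrable.mono' (hVexp.const_mul (16 / η ^ 2))
      (((hVmeas 0).pow_const 2).mul (((hVmeas 0).const_mul _).exp)).aestronglyMeasurable
      (ae_of_all _ fun ω => ?_)
    rw [Real.norm_of_nonneg (mul_nonneg (pow_nonneg (hVnonneg 0 ω) 2) (Real.exp_pos _).le)]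
    have h2 := sq_le_exp_aux (η / 2) (V 0 ω) (by linarith) (hVnonneg 0 ω)
    have h4 : (4:ℝ) / (η/2) ^ 2 = 16 / η ^ 2 := by field_simp; ring
    have h3 : Real.exp (η / 2 * V 0 ω) * Real.exp (η / 2 * V 0 ω) = Real.exp (η * V 0 ω) := by
      rw [← Real.exp_add]; ring_nf
    rw [h4] at h2
    calc V 0 ω ^ 2 * Real.exp (η / 2 * V 0 ω)
        ≤ 16 / η ^ 2 * Real.exp (η / 2 * V 0 ω) * Real.exp (η / 2 * V 0 ω) := by
          nlinarith [Real.exp_pos (η / 2 * V 0 ω)]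
      _ = 16 / η ^ 2 * Real.exp (η * V 0 ω) := by rw [mul_assoc, h3]
  set KU : ℝ := ∫ ω, U 0 ω ^ 2 ∂ℙ with hKUdef
  set KV : ℝ := ∫ ω, V 0 ω ^ 2 * Real.exp (η / 2 * V 0 ω) ∂ℙ with hKVdef
  have hKU0 : 0 ≤ KU := integral_nonneg fun ω => pow_nonneg (hUnonneg 0 ω) 2
  have hKV0 : 0 ≤ KV := integral_nonneg fun ω =>
    mul_nonneg (pow_nonneg (hVnonneg 0 ω) 2) (Real.exp_pos _).le
  set K : ℝ := KU / lam ^ 2 + KV / mu ^ 2 + 1 with hKdef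
  have hK : 0 < K := by positivity
  set t : ℝ := min (η * mu / 2) (δ / (2 * K)) with htdef
  have ht : 0 < t := lt_min (by positivity) (by positivity)
  have htmu : t / mu ≤ η / 2 := by
    rw [div_le_iff₀ hmu] at *
    calc t ≤ η * mu / 2 := min_le_left _ _
      _ = η / 2 * mu := by ring
  have htK : t * (2 * K) ≤ δ := by
    rw [← le_div_iff₀ (by positivity)]
    exact min_le_right _ _
  clear_value KU KV K δ t
  -- the independent increments family
  set Z : (ℕ ⊕ ℕ) → Ω → ℝ :=
    fun i => Sum.elim (fun _ (x : ℝ) => -(x / lam)) (fun _ (x : ℝ) => x / mu) i ∘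
      Sum.elim U V i with hZdef
  have hZl : ∀ i ω, Z (Sum.inl i) ω = -(U i ω / lam) := fun i ω => rfl
  have hZr : ∀ i ω, Z (Sum.inr i) ω = V i ω / mu := fun i ω => rfl
  have hZmeas : ∀ i, Measurable (Z i) := by
    rintro (i | i)
    · exact ((hUmeas i).div_const lam).neg
    · exact (hVmeas i).div_const mu
  have hZindep : iIndepFun Z ℙ := by
    refine hindep.comp _ ?_
    rintro (i | i)
    · exact (measurable_id.div_const lam).neg
    · exact measurable_id.div_const mu
  -- integrability of exponentials of the increments
  have hintU : ∀ i, Integrable (fun ω => Real.exp (t * Z (Sum.inl i) ω)) ℙ := by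
    intro i
    refine Integrable.mono' (integrable_const 1)
      (((hZmeas (Sum.inl i)).const_mul t).exp).aestronglyMeasurable
      (ae_of_all _ fun ω => ?_)
    rw [Real.norm_of_nonneg (Real.exp_pos _).le, Real.exp_le_one_iff, hZl]
    exact mul_nonpos_of_nonneg_of_nonpos ht.le
      (neg_nonpos.2 (div_nonneg (hUnonneg i ω) hlam.le))
  have hintV0 : Integrable (fun ω => Real.exp (t * Z (Sum.inr 0) ω)) ℙ := by
    refine Integrable.mono' hVexp
      (((hZmeas (Sum.inr 0)).const_mul t).exp).aestronglyMeasurable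
      (ae_of_all _ fun ω => ?_)
    rw [Real.norm_of_nonneg (Real.exp_pos _).le, Real.exp_le_exp, hZr]
    have : t * (V 0 ω / mu) = t / mu * V 0 ω := by ring
    rw [this]
    apply mul_le_mul_of_nonneg_right _ (hVnonneg 0 ω)
    linarith
  have hidV : ∀ i, IdentDistrib (fun ω => Real.exp (t * Z (Sum.inr i) ω))
      (fun ω => Real.exp (t * Z (Sum.inr 0) ω)) ℙ ℙ := by
    intro i
    exact (hVid i).comp (by fun_prop : Measurable fun x : ℝ => Real.exp (t * (x / mu)))
  have hintV : ∀ i, Integrable (fun ω => Real.exp (t * Z (Sum.inr i) ω)) ℙ :=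
    fun i => (hidV i).integrable_iff.2 hintV0
  have hintZ : ∀ i, Integrable (fun ω => Real.exp (t * Z i ω)) ℙ := by
    rintro (i | i)
    exacts [hintU i, hintV i]
  -- the two one-step mgf values
  set ρU : ℝ := mgf (Z (Sum.inl 0)) ℙ t with hρUdef
  set ρV : ℝ := mgf (Z (Sum.inr 0)) ℙ t with hρVdef
  have hmgfl : ∀ i, mgf (Z (Sum.inl i)) ℙ t = ρU := by
    intro i
    have h : IdentDistrib (fun ω => Real.exp (t * Z (Sum.inl i) ω))
        (fun ω => Real.exp (t * Z (Sum.inl 0) ω)) ℙ ℙ :=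
      (hUid i).comp (by fun_prop : Measurable fun x : ℝ => Real.exp (t * -(x / lam)))
    exact h.integral_eq
  have hmgfr : ∀ i, mgf (Z (Sum.inr i)) ℙ t = ρV := fun i => (hidV i).integral_eq
  have hρU0 : 0 ≤ ρU := mgf_nonneg
  have hρV0 : 0 ≤ ρV := mgf_nonneg
  -- bound on ρU
  have hρU : ρU ≤ Real.exp (-(t / lam) + (t / lam) ^ 2 * KU) := by
    have hptw : ∀ ω, Real.exp (t * Z (Sum.inl 0) ω) ≤
        1 - t / lam * U 0 ω + (t / lam) ^ 2 * U 0 ω ^ 2 := by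
      intro ω
      have hs : 0 ≤ t / lam * U 0 ω :=
        mul_nonneg (div_nonneg ht.le hlam.le) (hUnonneg 0 ω)
      have h := exp_neg_le_aux (t / lam * U 0 ω) hs
      have heq : t * Z (Sum.inl 0) ω = -(t / lam * U 0 ω) := by rw [hZl]; ring
      rw [heq]
      calc Real.exp (-(t / lam * U 0 ω)) ≤ 1 - t / lam * U 0 ω + (t / lam * U 0 ω) ^ 2 := h
        _ = 1 - t / lam * U 0 ω + (t / lam) ^ 2 * U 0 ω ^ 2 := by ring
    have hI : ρU ≤ ∫ ω, (1 - t / lam * U 0 ω + (t / lam) ^ 2 * U 0 ω ^ 2) ∂ℙ := by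
      refine integral_mono (hintU 0) ?_ hptw
      exact ((integrable_const (1:ℝ)).sub (intU.const_mul _)).add (intU2.const_mul _)
    have hA : Integrable (fun ω => (1:ℝ) - t / lam * U 0 ω) ℙ :=
      (integrable_const 1).sub (intU.const_mul _)
    have hcalc : ∫ ω, (1 - t / lam * U 0 ω + (t / lam) ^ 2 * U 0 ω ^ 2) ∂ℙ
        = 1 - t / lam + (t / lam) ^ 2 * KU := by
      have e1 : ∫ ω, (1 - t / lam * U 0 ω + (t / lam) ^ 2 * U 0 ω ^ 2) ∂ℙ
          = (∫ ω, ((1:ℝ) - t / lam * U 0 ω) ∂ℙ) + ∫ ω, (t / lam) ^ 2 * U 0 ω ^ 2 ∂ℙ :=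
        integral_add hA (intU2.const_mul _)
      have e2 : ∫ ω, ((1:ℝ) - t / lam * U 0 ω) ∂ℙ
          = (∫ _ω, (1:ℝ) ∂ℙ) - ∫ ω, t / lam * U 0 ω ∂ℙ :=
        integral_sub (integrable_const 1) (intU.const_mul _)
      rw [e1, e2, integral_const_mul, integral_const_mul, hUmean, integral_const]
      simp [← hKUdef]
    rw [hcalc] at hI
    refine hI.trans ?_
    have := Real.add_one_le_exp (-(t / lam) + (t / lam) ^ 2 * KU)
    linarith
  -- bound on ρV
  have hρV : ρV ≤ Real.exp (t / mu + (t / mu) ^ 2 * KV) := by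
    have hptw : ∀ ω, Real.exp (t * Z (Sum.inr 0) ω) ≤
        1 + t / mu * V 0 ω + (t / mu) ^ 2 * (V 0 ω ^ 2 * Real.exp (η / 2 * V 0 ω)) := by
      intro ω
      have hx : 0 ≤ t / mu * V 0 ω :=
        mul_nonneg (div_nonneg ht.le hmu.le) (hVnonneg 0 ω)
      have h := exp_le_aux (t / mu * V 0 ω) hx
      have heq : t * Z (Sum.inr 0) ω = t / mu * V 0 ω := by rw [hZr]; ring
      rw [heq]
      have hmono : Real.exp (t / mu * V 0 ω) ≤ Real.exp (η / 2 * V 0 ω) := by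
        rw [Real.exp_le_exp]
        exact mul_le_mul_of_nonneg_right htmu (hVnonneg 0 ω)
      calc Real.exp (t / mu * V 0 ω)
          ≤ 1 + t / mu * V 0 ω + (t / mu * V 0 ω) ^ 2 * Real.exp (t / mu * V 0 ω) := h
        _ ≤ 1 + t / mu * V 0 ω + (t / mu * V 0 ω) ^ 2 * Real.exp (η / 2 * V 0 ω) := by
            have : 0 ≤ (t / mu * V 0 ω) ^ 2 := sq_nonneg _
            nlinarith [hmono]
        _ = 1 + t / mu * V 0 ω + (t / mu) ^ 2 * (V 0 ω ^ 2 * Real.exp (η / 2 * V 0 ω)) := by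
            ring
    have hI : ρV ≤ ∫ ω,
        (1 + t / mu * V 0 ω + (t / mu) ^ 2 * (V 0 ω ^ 2 * Real.exp (η / 2 * V 0 ω))) ∂ℙ := by
      refine integral_mono (hintV 0) ?_ hptw
      exact ((integrable_const (1:ℝ)).add (intV.const_mul _)).add (intVe.const_mul _)
    have hA : Integrable (fun ω => (1:ℝ) + t / mu * V 0 ω) ℙ :=
      (integrable_const 1).add (intV.const_mul _)
    have hcalc : ∫ ω,
        (1 + t / mu * V 0 ω + (t / mu) ^ 2 * (V 0 ω ^ 2 * Real.exp (η / 2 * V 0 ω))) ∂ℙ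
        = 1 + t / mu + (t / mu) ^ 2 * KV := by
      have e1 : ∫ ω,
          (1 + t / mu * V 0 ω + (t / mu) ^ 2 * (V 0 ω ^ 2 * Real.exp (η / 2 * V 0 ω))) ∂ℙ
          = (∫ ω, ((1:ℝ) + t / mu * V 0 ω) ∂ℙ)
            + ∫ ω, (t / mu) ^ 2 * (V 0 ω ^ 2 * Real.exp (η / 2 * V 0 ω)) ∂ℙ :=
        integral_add hA (intVe.const_mul _)
      have e2 : ∫ ω, ((1:ℝ) + t / mu * V 0 ω) ∂ℙ
          = (∫ _ω, (1:ℝ) ∂ℙ) + ∫ ω, t / mu * V 0 ω ∂ℙ :=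
        integral_add (integrable_const 1) (intV.const_mul _)
      rw [e1, e2, integral_const_mul, integral_const_mul, hVmean, integral_const]
      simp [← hKVdef]
    rw [hcalc] at hI
    refine hI.trans ?_
    have := Real.add_one_le_exp (t / mu + (t / mu) ^ 2 * KV)
    linarith
  -- combine
  set ρ : ℝ := Real.exp (-(t * δ / 2)) with hρdef
  clear_value ρU ρV
  have hρpos : 0 < ρ := Real.exp_pos _
  have hρlt1 : ρ < 1 := by
    rw [hρdef, Real.exp_lt_one_iff]
    have := mul_pos ht hδ
    linarith
  have hρUV : ρU * ρV ≤ ρ := by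
    have h1 : ρU * ρV ≤ Real.exp (-(t / lam) + (t / lam) ^ 2 * KU) *
        Real.exp (t / mu + (t / mu) ^ 2 * KV) :=
      mul_le_mul hρU hρV hρV0 (Real.exp_pos _).le
    rw [← Real.exp_add] at h1
    refine h1.trans (Real.exp_le_exp.2 ?_)
    have hexpand : -(t / lam) + (t / lam) ^ 2 * KU + (t / mu + (t / mu) ^ 2 * KV)
        = -(t * δ) + t ^ 2 * (K - 1) := by
      rw [hKdef, hδdef]
      ring
    rw [hexpand]
    nlinarith [mul_le_mul_of_nonneg_left htK ht.le, sq_nonneg t]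
  have h1ρ : 0 < 1 - ρ := by linarith
  refine ⟨1 / (1 - ρ), one_div_pos.2 h1ρ, t, ht, ?_⟩
  intro w y hw hy W Y hW0 hY0 hWrec hYrec n a ha
  -- Lindley-type pathwise domination by partial sums
  have key : ∀ m ω, ∃ j, j ≤ m ∧
      W m ω ≤ (if j = 0 then w else 0) +
        ∑ i ∈ Finset.Ico j m, (V i ω / mu - U i ω / lam) := by
    intro m
    induction m with
    | zero => exact fun ω => ⟨0, le_refl _, by simp [hW0 ω]⟩
    | succ m ih =>
      intro ω
      obtain ⟨j, hj, hle⟩ := ih ω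
      rcases le_or_gt (W m ω + V m ω / mu - U m ω / lam) 0 with h | h
      · refine ⟨m + 1, le_refl _, ?_⟩
        rw [hWrec m ω, max_eq_right h]
        simp
      · refine ⟨j, hj.trans (Nat.le_succ m), ?_⟩
        rw [hWrec m ω, max_eq_left h.le, Finset.sum_Ico_succ_top hj]
        linarith
  rcases le_or_gt a w with haw | haw
  · -- trivial case : a ≤ w
    have hmax : max (a - w) 0 = 0 := max_eq_right (by linarith)
    rw [hmax, mul_zero, Real.exp_zero, mul_one]
    have h1 : (ℙ {ω | a ≤ W n ω}).toReal ≤ 1 := by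
      have h2 : ℙ {ω | a ≤ W n ω} ≤ 1 := prob_le_one
      calc (ℙ {ω | a ≤ W n ω}).toReal ≤ (1 : ℝ≥0∞).toReal :=
            ENNReal.toReal_mono ENNReal.one_ne_top h2
        _ = 1 := by simp
    refine h1.trans ?_
    rw [le_div_iff₀ h1ρ, one_mul]
    linarith
  · -- main case : w < a
    have hmax : max (a - w) 0 = a - w := max_eq_left (by linarith)
    rw [hmax]
    set F : ℕ → Finset (ℕ ⊕ ℕ) := fun j =>
      ((Finset.Ico j n).map ⟨Sum.inl, Sum.inl_injective⟩) ∪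
      ((Finset.Ico j n).map ⟨Sum.inr, Sum.inr_injective⟩) with hFdef
    have hdisj : ∀ j, Disjoint ((Finset.Ico j n).map ⟨Sum.inl, Sum.inl_injective⟩)
        (((Finset.Ico j n).map ⟨Sum.inr, Sum.inr_injective⟩) : Finset (ℕ ⊕ ℕ)) := by
      intro j
      simp [Finset.disjoint_left]
    have hFsum : ∀ j ω, (∑ i ∈ F j, Z i) ω
        = ∑ i ∈ Finset.Ico j n, (V i ω / mu - U i ω / lam) := by
      intro j ω
      rw [hFdef, Finset.sum_apply, Finset.sum_union (hdisj j), Finset.sum_map,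
        Finset.sum_map, ← Finset.sum_add_distrib]
      refine Finset.sum_congr rfl fun i _ => ?_
      simp only [Function.Embedding.coeFn_mk, hZl, hZr]
      ring
    set c : ℕ → ℝ := fun j => if j = 0 then w else 0 with hcdef
    have hchern : ∀ j ∈ Finset.range (n + 1),
        (ℙ {ω | a - c j ≤ (∑ i ∈ F j, Z i) ω}).toReal
          ≤ Real.exp (-t * (a - w)) * ρ ^ (n - j) := by
      intro j _
      have hint : Integrable (fun ω => Real.exp (t * (∑ i ∈ F j, Z i) ω)) ℙ :=
        hZindep.integrable_exp_mul_sum hZmeas (fun i _ => hintZ i)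
      have h1 := measure_ge_le_exp_mul_mgf (μ := ℙ) (X := ∑ i ∈ F j, Z i)
        (a - c j) ht.le hint
      refine h1.trans ?_
      have hmgf : mgf (∑ i ∈ F j, Z i) ℙ t = (ρU * ρV) ^ (n - j) := by
        rw [hZindep.mgf_sum hZmeas, hFdef, Finset.prod_union (hdisj j),
          Finset.prod_map, Finset.prod_map]
        simp only [Function.Embedding.coeFn_mk]
        rw [Finset.prod_congr rfl (fun i _ => hmgfl i),
          Finset.prod_congr rfl (fun i _ => hmgfr i),
          Finset.prod_const, Finset.prod_const, Nat.card_Ico, ← mul_pow]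
      rw [hmgf]
      have hρpow : (ρU * ρV) ^ (n - j) ≤ ρ ^ (n - j) :=
        pow_le_pow_left₀ (mul_nonneg hρU0 hρV0) hρUV _
      have hcj : c j ≤ w := by
        by_cases h : j = 0 <;> simp [hcdef, h, hw]
      have hexp : Real.exp (-t * (a - c j)) ≤ Real.exp (-t * (a - w)) := by
        rw [Real.exp_le_exp]
        nlinarith [ht.le]
      exact mul_le_mul hexp hρpow (pow_nonneg (mul_nonneg hρU0 hρV0) _)
        (Real.exp_pos _).le
    have hsub : {ω | a ≤ W n ω} ⊆
        ⋃ j ∈ Finset.range (n + 1), {ω | a - c j ≤ (∑ i ∈ F j, Z i) ω} := by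
      intro ω hω
      obtain ⟨j, hjn, hle⟩ := key n ω
      have hω' : a ≤ W n ω := hω
      have hmem : a - c j ≤ (∑ i ∈ F j, Z i) ω := by
        rw [hFsum j ω]
        simp only [hcdef] at hle ⊢
        linarith
      exact Set.mem_biUnion (Finset.mem_range.2 (Nat.lt_succ_of_le hjn)) hmem
    have hmeasle : (ℙ {ω | a ≤ W n ω}).toReal
        ≤ ∑ j ∈ Finset.range (n + 1),
            (ℙ {ω | a - c j ≤ (∑ i ∈ F j, Z i) ω}).toReal := by
      have h1 : ℙ {ω | a ≤ W n ω} ≤ ∑ j ∈ Finset.range (n + 1),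
          ℙ {ω | a - c j ≤ (∑ i ∈ F j, Z i) ω} :=
        (measure_mono hsub).trans (measure_biUnion_finset_le _ _)
      have h2 : (∑ j ∈ Finset.range (n + 1),
          ℙ {ω | a - c j ≤ (∑ i ∈ F j, Z i) ω}) ≠ ⊤ :=
        ENNReal.sum_ne_top.2 fun j _ => measure_ne_top _ _
      calc (ℙ {ω | a ≤ W n ω}).toReal
          ≤ (∑ j ∈ Finset.range (n + 1),
              ℙ {ω | a - c j ≤ (∑ i ∈ F j, Z i) ω}).toReal :=
            ENNReal.toReal_mono h2 h1
        _ = _ := ENNReal.toReal_sum fun j _ => measure_ne_top _ _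
    refine hmeasle.trans ?_
    refine (Finset.sum_le_sum hchern).trans ?_
    rw [← Finset.mul_sum]
    have hgeom : ∑ j ∈ Finset.range (n + 1), ρ ^ (n - j) ≤ 1 / (1 - ρ) := by
      have h1 : ∑ j ∈ Finset.range (n + 1), ρ ^ (n - j)
          = ∑ j ∈ Finset.range (n + 1), ρ ^ j := by
        have h := Finset.sum_range_reflect (fun m => ρ ^ m) (n + 1)
        simpa using h
      rw [h1, geom_sum_eq (by linarith : ρ ≠ 1)]
      have h2 : (ρ ^ (n + 1) - 1) / (ρ - 1) = (1 - ρ ^ (n + 1)) / (1 - ρ) := by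
        rw [← neg_div_neg_eq]
        ring_nf
      rw [h2]
      have h3 : 1 - ρ ^ (n + 1) ≤ 1 := by
        have := pow_nonneg hρpos.le (n + 1)
        linarith
      exact div_le_div_of_nonneg_right h3 h1ρ.le
    calc Real.exp (-t * (a - w)) * ∑ j ∈ Finset.range (n + 1), ρ ^ (n - j)
        ≤ Real.exp (-t * (a - w)) * (1 / (1 - ρ)) :=
          mul_le_mul_of_nonneg_left hgeom (Real.exp_pos _).le
      _ = 1 / (1 - ρ) * Real.exp (-t * (a - w)) := mul_comm _ _
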